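/- arXiv:1912.09300 — 2 statements merged into one kernel-verified Lean document; each statement's English description precedes it below -/
import Mathlib

section
/- Let μ̄_n be the measure on ℂ with Lebesgue density ρ_n(z) = (1/π) e^{-n|z|²} Σ_{k=0}^{n-1} (n|z|²)^k / k!, and let D(μ̄_n, μ_∞) := sup |μ̄_n(B_R(z_0)) − μ_∞(B_R(z_0))|, the supremum running over all open balls B_R(z_0) ⊆ ℂ. Then lim_{n→∞} √(2πn) · D(μ̄_n, μ_∞) = 1. -/
open MeasureTheory Metric

/-- Density of the mean empirical spectral distribution of a normalized `n × n`
Ginibre matrix: `ρ_n(z) = (1/π) e^{-n|z|²} Σ_{k=0}^{n-1} (n|z|²)^k / k!`. -/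
noncomputable def rhoGin (n : ℕ) (z : ℂ) : ℝ :=
  (1 / Real.pi) * Real.exp (-(n : ℝ) * ‖z‖ ^ 2) *
    ∑ k ∈ Finset.range n, ((n : ℝ) * ‖z‖ ^ 2) ^ k / (Nat.factorial k : ℝ)

/-- The mean empirical spectral distribution `μ̄_n` of the Ginibre ensemble. -/
noncomputable def muBarGin (n : ℕ) : Measure ℂ :=
  volume.withDensity fun z => ENNReal.ofReal (rhoGin n z)

/-- The Circular Law `μ_∞`: uniform distribution on the unit disc. -/
noncomputable def muInf : Measure ℂ :=
  volume.withDensity fun z => ENNReal.ofReal (if ‖z‖ < 1 then 1 / Real.pi else 0)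

/-- `D(μ̄_n, μ_∞)`: the supremum of `|μ̄_n(B_R(z₀)) − μ_∞(B_R(z₀))|` over all open balls. -/
noncomputable def DGin (n : ℕ) : ℝ :=
  sSup {d : ℝ | ∃ (z₀ : ℂ) (R : ℝ), 0 < R ∧
    d = |(muBarGin n (ball z₀ R)).toReal - (muInf (ball z₀ R)).toReal|}

noncomputable def expS (n : ℕ) (x : ℝ) : ℝ := ∑ i ∈ Finset.range n, x ^ i / (Nat.factorial i : ℝ)

lemma expS_zero_eval (n : ℕ) : expS (n + 1) 0 = 1 := by
  rw [expS, Finset.sum_range_succ']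
  simp

lemma expS_nonneg (n : ℕ) {x : ℝ} (hx : 0 ≤ x) : 0 ≤ expS n x := by
  apply Finset.sum_nonneg
  intro i _
  positivity

lemma expS_le_exp (n : ℕ) {x : ℝ} (hx : 0 ≤ x) : expS n x ≤ Real.exp x :=
  Real.sum_le_exp_of_nonneg hx n

lemma hasDerivAt_expS (n : ℕ) (x : ℝ) : HasDerivAt (expS (n + 1)) (expS n x) x := by
  have h : HasDerivAt (expS (n + 1))
      (∑ i ∈ Finset.range (n + 1), (i : ℝ) * x ^ (i - 1) / (Nat.factorial i : ℝ)) x := by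
    apply HasDerivAt.fun_sum
    intro i _
    exact (hasDerivAt_pow i x).div_const _
  convert h using 1
  rw [Finset.sum_range_succ']
  simp only [Nat.factorial_succ, Nat.cast_zero, pow_zero, Nat.factorial_zero, Nat.cast_one,
    zero_mul, zero_div, add_zero, Nat.add_sub_cancel, Nat.cast_mul, Nat.cast_add, Nat.cast_one]
  rw [expS]
  apply Finset.sum_congr rfl
  intro i _
  have hi : ((i : ℝ) + 1) ≠ 0 := by positivity
  field_simp


lemma hasDerivAt_H (n k : ℕ) (hn : 0 < n) (y : ℝ) :
    HasDerivAt (fun y : ℝ => (1 / (n : ℝ)) * (1 - Real.exp (-((n : ℝ) * y ^ 2)) * expS (k + 1) ((n : ℝ) * y ^ 2)))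
      (2 * y * Real.exp (-((n : ℝ) * y ^ 2)) * ((n : ℝ) * y ^ 2) ^ k / (Nat.factorial k : ℝ)) y := by
  have hu : HasDerivAt (fun y : ℝ => (n : ℝ) * y ^ 2) ((n : ℝ) * (2 * y)) y := by
    simpa using ((hasDerivAt_pow 2 y).const_mul (n : ℝ))
  set x := (n : ℝ) * y ^ 2 with hx
  have hG : HasDerivAt (fun x : ℝ => (1 / (n : ℝ)) * (1 - Real.exp (-x) * expS (k + 1) x))
      ((1 / (n : ℝ)) * (Real.exp (-x) * (x ^ k / (Nat.factorial k : ℝ)))) x := by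
    have he : HasDerivAt (fun x : ℝ => Real.exp (-x)) (-Real.exp (-x)) x := by
      simpa using (hasDerivAt_neg x).exp
    have hprod := he.mul (hasDerivAt_expS k x)
    have h2 := ((hasDerivAt_const x (1:ℝ)).sub hprod).const_mul (1 / (n : ℝ))
    refine HasDerivAt.congr_deriv h2 ?_
    have hS : expS (k + 1) x - expS k x = x ^ k / (Nat.factorial k : ℝ) := by
      rw [expS, expS, Finset.sum_range_succ]; ring
    rw [← hS]; ring
  have := hG.comp y hu
  refine HasDerivAt.congr_deriv this ?_
  have hn' : (n : ℝ) ≠ 0 := by positivity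
  field_simp

lemma integral_slice (n k : ℕ) (hn : 0 < n) (R : ℝ) :
    ∫ y in (0:ℝ)..R, 2 * y * Real.exp (-((n : ℝ) * y ^ 2)) * ((n : ℝ) * y ^ 2) ^ k / (Nat.factorial k : ℝ)
      = (1 / (n : ℝ)) * (1 - Real.exp (-((n : ℝ) * R ^ 2)) * expS (k + 1) ((n : ℝ) * R ^ 2)) := by
  have := intervalIntegral.integral_eq_sub_of_hasDerivAt
    (f := fun y : ℝ => (1 / (n : ℝ)) * (1 - Real.exp (-((n : ℝ) * y ^ 2)) * expS (k + 1) ((n : ℝ) * y ^ 2)))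
    (f' := fun y : ℝ => 2 * y * Real.exp (-((n : ℝ) * y ^ 2)) * ((n : ℝ) * y ^ 2) ^ k / (Nat.factorial k : ℝ))
    (a := 0) (b := R)
    (fun y _ => hasDerivAt_H n k hn y) ?_
  · rw [this]
    simp [expS_zero_eval]
  · apply Continuous.intervalIntegrable
    fun_prop


lemma rhoGin_eq_norm (n : ℕ) (z : ℂ) :
    rhoGin n z = (1 / Real.pi) * Real.exp (-(n : ℝ) * ‖z‖ ^ 2) *
      ∑ k ∈ Finset.range n, ((n : ℝ) * ‖z‖ ^ 2) ^ k / (Nat.factorial k : ℝ) := by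
  rw [rhoGin]

lemma continuous_rhoGin (n : ℕ) : Continuous (rhoGin n) := by
  have : rhoGin n = fun z => (1 / Real.pi) * Real.exp (-(n : ℝ) * ‖z‖ ^ 2) *
      ∑ k ∈ Finset.range n, ((n : ℝ) * ‖z‖ ^ 2) ^ k / (Nat.factorial k : ℝ) := by
    ext z; exact rhoGin_eq_norm n z
  rw [this]
  fun_prop

lemma integral_ball_rho (n : ℕ) (hn : 0 < n) {R : ℝ} (hR : 0 ≤ R) :
    ∫ z in ball (0:ℂ) R, rhoGin n z
      = ∑ k ∈ Finset.range n,
          (1 / (n : ℝ)) * (1 - Real.exp (-((n : ℝ) * R ^ 2)) * expS (k + 1) ((n : ℝ) * R ^ 2)) := by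
  set g : ℝ → ℝ := fun y => (1 / Real.pi) * Real.exp (-(n : ℝ) * y ^ 2) *
      ∑ k ∈ Finset.range n, ((n : ℝ) * y ^ 2) ^ k / (Nat.factorial k : ℝ) with hg
  set f : ℝ → ℝ := fun y => if y < R then g y else 0 with hf
  have h1 : ∫ z in ball (0:ℂ) R, rhoGin n z = ∫ z : ℂ, f ‖z‖ := by
    rw [← MeasureTheory.integral_indicator measurableSet_ball]
    congr 1
    ext z
    by_cases hz : z ∈ ball (0:ℂ) R
    · rw [Set.indicator_of_mem hz]
      rw [mem_ball_zero_iff] at hz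
      rw [hf]
      simp only [if_pos hz]
      rw [rhoGin_eq_norm, hg]
    · rw [Set.indicator_of_notMem hz]
      rw [mem_ball_zero_iff, not_lt] at hz
      simp only [hf, if_neg (not_lt.2 hz)]
  rw [h1, MeasureTheory.integral_fun_norm_addHaar volume f]
  rw [Complex.finrank_real_complex, Measure.real, Complex.volume_ball]
  have hπ : ((ENNReal.ofReal 1 ^ 2 * (NNReal.pi : ENNReal)).toReal) = Real.pi := by
    simp [ENNReal.toReal_mul]
  rw [hπ]
  have h2 : ∫ y in Set.Ioi (0:ℝ), y ^ (2 - 1) • f y = ∫ y in (0:ℝ)..R, y * g y := by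
    rw [show (2 - 1 : ℕ) = 1 from rfl]
    simp only [pow_one, smul_eq_mul]
    have : ∀ y : ℝ, y * f y = Set.indicator (Set.Iio R) (fun y => y * g y) y := by
      intro y
      by_cases hy : y < R
      · simp [hf, if_pos hy, Set.indicator_of_mem (Set.mem_Iio.2 hy)]
      · simp [hf, if_neg hy, Set.indicator_of_notMem (by simpa using hy : y ∉ Set.Iio R)]
    simp_rw [this]
    rw [MeasureTheory.setIntegral_indicator measurableSet_Iio]
    rw [show Set.Ioi (0:ℝ) ∩ Set.Iio R = Set.Ioo 0 R by rw [Set.Ioi_inter_Iio]]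
    rw [intervalIntegral.integral_of_le hR, ← MeasureTheory.integral_Ioc_eq_integral_Ioo]
  rw [h2]
  have h3 : ∫ y in (0:ℝ)..R, y * g y
      = ∑ k ∈ Finset.range n, ∫ y in (0:ℝ)..R,
          (1 / Real.pi) * (y * Real.exp (-((n:ℝ) * y ^ 2)) * ((n : ℝ) * y ^ 2) ^ k / (Nat.factorial k : ℝ)) := by
    rw [← intervalIntegral.integral_finset_sum]
    · apply intervalIntegral.integral_congr
      intro y _
      rw [hg]
      simp only [Finset.mul_sum, neg_mul]
      apply Finset.sum_congr rfl
      intro k _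
      ring
    · intro k _
      apply Continuous.intervalIntegrable
      fun_prop
  rw [h3, nsmul_eq_mul, smul_eq_mul, Finset.mul_sum, Finset.mul_sum]
  apply Finset.sum_congr rfl
  intro k _
  have hk := integral_slice n k hn R
  have hJ : ∀ y : ℝ, (1 / Real.pi) * (y * Real.exp (-((n:ℝ) * y ^ 2)) * ((n : ℝ) * y ^ 2) ^ k / (Nat.factorial k : ℝ))
      = (1 / Real.pi) * (y * Real.exp (-((n:ℝ) * y ^ 2)) * ((n : ℝ) * y ^ 2) ^ k / (Nat.factorial k : ℝ)) :=
    fun _ => rfl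
  rw [show (fun y => (1 / Real.pi) * (y * Real.exp (-((n:ℝ) * y ^ 2)) * ((n : ℝ) * y ^ 2) ^ k / (Nat.factorial k : ℝ)))
      = (fun y => (1 / Real.pi) * (y * Real.exp (-((n:ℝ) * y ^ 2)) * ((n : ℝ) * y ^ 2) ^ k / (Nat.factorial k : ℝ))) from rfl]
  rw [intervalIntegral.integral_const_mul]
  rw [← hk]
  have h4 : ∀ y : ℝ, 2 * y * Real.exp (-((n:ℝ) * y ^ 2)) * ((n : ℝ) * y ^ 2) ^ k / (Nat.factorial k : ℝ)
      = 2 * (y * Real.exp (-((n:ℝ) * y ^ 2)) * ((n : ℝ) * y ^ 2) ^ k / (Nat.factorial k : ℝ)) := by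
    intro y; ring
  simp_rw [h4]
  rw [intervalIntegral.integral_const_mul]
  have hπ' : Real.pi ≠ 0 := Real.pi_ne_zero
  field_simp
  congr 1
  apply intervalIntegral.integral_congr
  intro x _
  ring


noncomputable def dGin (n : ℕ) : ℝ := (n : ℝ) ^ n * Real.exp (-(n : ℝ)) / (Nat.factorial n : ℝ)

lemma sum_expS (x : ℝ) (n : ℕ) :
    ∑ k ∈ Finset.range n, expS (k + 1) x
      = ∑ i ∈ Finset.range n, ((n : ℝ) - i) * x ^ i / (Nat.factorial i : ℝ) := by
  induction n with
  | zero => simp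
  | succ n ih =>
    rw [Finset.sum_range_succ, ih, expS, Finset.sum_range_succ, Finset.sum_range_succ]
    push_cast
    rw [← add_assoc, ← Finset.sum_add_distrib]
    have : ∀ i ∈ Finset.range n,
        ((n : ℝ) - i) * x ^ i / (Nat.factorial i : ℝ) + x ^ i / (Nat.factorial i : ℝ)
          = ((n : ℝ) + 1 - i) * x ^ i / (Nat.factorial i : ℝ) := by
      intro i _; ring
    rw [Finset.sum_congr rfl this]
    ring

lemma key_sum (x : ℝ) (m : ℕ) :
    ∑ i ∈ Finset.range (m + 1), (x - i) * x ^ i / (Nat.factorial i : ℝ)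
      = x ^ (m + 1) / (Nat.factorial m : ℝ) := by
  induction m with
  | zero => simp
  | succ m ih =>
    rw [Finset.sum_range_succ, ih]
    have hm : (Nat.factorial (m + 1) : ℝ) = (m + 1) * (Nat.factorial m : ℝ) := by
      rw [Nat.factorial_succ]; push_cast; ring
    rw [hm]
    have h1 : (Nat.factorial m : ℝ) ≠ 0 := Nat.cast_ne_zero.2 (Nat.factorial_ne_zero m)
    have h2 : ((m : ℝ) + 1) ≠ 0 := by positivity
    field_simp
    push_cast
    ring

lemma T_val (n : ℕ) (hn : 0 < n) :
    ∑ k ∈ Finset.range n, (1 / (n : ℝ)) * (1 - Real.exp (-((n : ℝ) * 1 ^ 2)) * expS (k + 1) ((n : ℝ) * 1 ^ 2))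
      = 1 - dGin n := by
  have hxx : ((n : ℝ) * 1 ^ 2) = (n : ℝ) := by ring
  rw [hxx]
  have hn' : (n : ℝ) ≠ 0 := Nat.cast_ne_zero.2 hn.ne'
  have hfac : (Nat.factorial n : ℝ) = (n : ℝ) * (Nat.factorial (n - 1) : ℝ) := by
    rw [← Nat.mul_factorial_pred hn.ne']
    push_cast
    ring
  have hsum : ∑ k ∈ Finset.range n, expS (k + 1) (n : ℝ)
      = (n : ℝ) ^ n / (Nat.factorial (n - 1) : ℝ) := by
    rw [sum_expS]
    have h := key_sum (n : ℝ) (n - 1)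
    rw [Nat.sub_add_cancel hn] at h
    rw [h]
  have hf1 : (Nat.factorial (n - 1) : ℝ) ≠ 0 := Nat.cast_ne_zero.2 (Nat.factorial_ne_zero _)
  calc ∑ k ∈ Finset.range n, (1 / (n : ℝ)) * (1 - Real.exp (-(n : ℝ)) * expS (k + 1) (n : ℝ))
      = (1 / (n : ℝ)) * ∑ k ∈ Finset.range n, (1 - Real.exp (-(n : ℝ)) * expS (k + 1) (n : ℝ)) := by
        rw [Finset.mul_sum]
    _ = (1 / (n : ℝ)) * ((n : ℝ) - Real.exp (-(n : ℝ)) * ((n : ℝ) ^ n / (Nat.factorial (n - 1) : ℝ))) := by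
        rw [Finset.sum_sub_distrib, Finset.sum_const, Finset.card_range, ← Finset.mul_sum, hsum]
        simp [nsmul_eq_mul]
    _ = 1 - dGin n := by
        rw [dGin, hfac]
        field_simp

lemma T_le_one (n : ℕ) (hn : 0 < n) {x : ℝ} (hx : 0 ≤ x) :
    ∑ k ∈ Finset.range n, (1 / (n : ℝ)) * (1 - Real.exp (-x) * expS (k + 1) x) ≤ 1 := by
  have h : ∀ k ∈ Finset.range n, (1 / (n : ℝ)) * (1 - Real.exp (-x) * expS (k + 1) x) ≤ 1 / (n : ℝ) := by
    intro k _
    have h1 : 0 ≤ Real.exp (-x) * expS (k + 1) x :=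
      mul_nonneg (Real.exp_nonneg _) (expS_nonneg _ hx)
    have h2 : (0 : ℝ) < 1 / n := by positivity
    nlinarith
  calc ∑ k ∈ Finset.range n, (1 / (n : ℝ)) * (1 - Real.exp (-x) * expS (k + 1) x)
      ≤ ∑ _k ∈ Finset.range n, 1 / (n : ℝ) := Finset.sum_le_sum h
    _ = 1 := by
        rw [Finset.sum_const, Finset.card_range, nsmul_eq_mul]
        field_simp

lemma T_nonneg (n : ℕ) {x : ℝ} (hx : 0 ≤ x) :
    0 ≤ ∑ k ∈ Finset.range n, (1 / (n : ℝ)) * (1 - Real.exp (-x) * expS (k + 1) x) := by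
  apply Finset.sum_nonneg
  intro k _
  have h1 : Real.exp (-x) * expS (k + 1) x ≤ Real.exp (-x) * Real.exp x :=
    mul_le_mul_of_nonneg_left (expS_le_exp _ hx) (Real.exp_nonneg _)
  rw [← Real.exp_add] at h1
  simp at h1
  have : (0:ℝ) ≤ 1 / n := by positivity
  nlinarith


noncomputable def hInf (z : ℂ) : ℝ := if ‖z‖ < 1 then 1 / Real.pi else 0

lemma rhoGin_nonneg (n : ℕ) (z : ℂ) : 0 ≤ rhoGin n z := by
  rw [rhoGin]
  have h0 : (0:ℝ) ≤ (n : ℝ) * ‖z‖ ^ 2 := by positivity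
  have := expS_nonneg n h0
  rw [expS] at this
  positivity

lemma rhoGin_le (n : ℕ) (z : ℂ) : rhoGin n z ≤ 1 / Real.pi := by
  rw [rhoGin]
  have h0 : (0:ℝ) ≤ (n : ℝ) * ‖z‖ ^ 2 := by positivity
  have h1 := expS_le_exp n h0
  rw [expS] at h1
  have h2 : Real.exp (-((n : ℝ) * ‖z‖ ^ 2)) * (∑ k ∈ Finset.range n, ((n : ℝ) * ‖z‖ ^ 2) ^ k / (Nat.factorial k : ℝ))
      ≤ Real.exp (-((n : ℝ) * ‖z‖ ^ 2)) * Real.exp ((n : ℝ) * ‖z‖ ^ 2) :=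
    mul_le_mul_of_nonneg_left h1 (Real.exp_nonneg _)
  rw [← Real.exp_add, neg_add_cancel, Real.exp_zero] at h2
  have hπ : (0:ℝ) < 1 / Real.pi := by positivity
  calc (1 / Real.pi) * Real.exp (-(n : ℝ) * ‖z‖ ^ 2) *
        ∑ k ∈ Finset.range n, ((n : ℝ) * ‖z‖ ^ 2) ^ k / (Nat.factorial k : ℝ)
      = (1 / Real.pi) * (Real.exp (-((n : ℝ) * ‖z‖ ^ 2)) *
        ∑ k ∈ Finset.range n, ((n : ℝ) * ‖z‖ ^ 2) ^ k / (Nat.factorial k : ℝ)) := by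
        rw [neg_mul]; ring
    _ ≤ (1 / Real.pi) * 1 := mul_le_mul_of_nonneg_left h2 hπ.le
    _ = 1 / Real.pi := mul_one _

lemma hInf_eq_indicator : hInf = Set.indicator (ball (0:ℂ) 1) (fun _ => 1 / Real.pi) := by
  ext z
  rw [hInf]
  by_cases hz : z ∈ ball (0:ℂ) 1
  · rw [Set.indicator_of_mem hz]
    rw [mem_ball_zero_iff] at hz
    rw [if_pos hz]
  · rw [Set.indicator_of_notMem hz]
    rw [mem_ball_zero_iff] at hz
    rw [if_neg hz]

lemma hInf_integrable : Integrable hInf volume := by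
  rw [hInf_eq_indicator]
  apply MeasureTheory.IntegrableOn.integrable_indicator _ measurableSet_ball
  exact integrableOn_const measure_ball_lt_top.ne

lemma hInf_nonneg (z : ℂ) : 0 ≤ hInf z := by
  rw [hInf]
  split
  · positivity
  · exact le_refl 0

lemma rho_integrableOn (n : ℕ) (z₀ : ℂ) (R : ℝ) : IntegrableOn (rhoGin n) (ball z₀ R) volume := by
  apply IntegrableOn.mono_set _ ball_subset_closedBall
  exact ((continuous_rhoGin n).continuousOn).integrableOn_compact (isCompact_closedBall z₀ R)

lemma muBar_ball (n : ℕ) (z₀ : ℂ) (R : ℝ) :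
    (muBarGin n (ball z₀ R)).toReal = ∫ z in ball z₀ R, rhoGin n z := by
  rw [muBarGin, withDensity_apply _ measurableSet_ball]
  rw [← MeasureTheory.ofReal_integral_eq_lintegral_ofReal (rho_integrableOn n z₀ R)
    (Filter.Eventually.of_forall fun z => rhoGin_nonneg n z)]
  exact ENNReal.toReal_ofReal (setIntegral_nonneg measurableSet_ball fun z _ => rhoGin_nonneg n z)

lemma muInf_ball (z₀ : ℂ) (R : ℝ) :
    (muInf (ball z₀ R)).toReal = ∫ z in ball z₀ R, hInf z := by
  rw [muInf, withDensity_apply _ measurableSet_ball]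
  have : (fun z : ℂ => ENNReal.ofReal (if ‖z‖ < 1 then 1 / Real.pi else 0))
      = fun z => ENNReal.ofReal (hInf z) := by
    ext z; rw [hInf]
  rw [this]
  rw [← MeasureTheory.ofReal_integral_eq_lintegral_ofReal hInf_integrable.integrableOn
    (Filter.Eventually.of_forall hInf_nonneg)]
  exact ENNReal.toReal_ofReal (setIntegral_nonneg measurableSet_ball fun z _ => hInf_nonneg z)

lemma integral_ball_one (n : ℕ) (hn : 0 < n) :
    ∫ z in ball (0:ℂ) 1, rhoGin n z = 1 - dGin n := by
  rw [integral_ball_rho n hn zero_le_one]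
  exact T_val n hn

lemma integral_hInf_ball_one : ∫ z in ball (0:ℂ) 1, hInf z = 1 := by
  have h : ∀ z ∈ ball (0:ℂ) 1, hInf z = 1 / Real.pi := by
    intro z hz
    rw [mem_ball_zero_iff] at hz
    rw [hInf, if_pos hz]
  rw [setIntegral_congr_fun measurableSet_ball h, setIntegral_const]
  rw [Measure.real, Complex.volume_ball]
  simp only [ENNReal.toReal_mul, one_pow, ENNReal.toReal_pow, ENNReal.toReal_ofReal zero_le_one,
    ENNReal.coe_toReal, NNReal.coe_real_pi, smul_eq_mul]
  field_simp

lemma dGin_nonneg (n : ℕ) : 0 ≤ dGin n := by rw [dGin]; positivity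

lemma hInf_on_ball (z : ℂ) (hz : z ∈ ball (0:ℂ) 1) : hInf z = 1 / Real.pi := by
  rw [mem_ball_zero_iff] at hz
  rw [hInf, if_pos hz]

lemma hInf_off_ball (z : ℂ) (hz : z ∉ ball (0:ℂ) 1) : hInf z = 0 := by
  rw [mem_ball_zero_iff] at hz
  rw [hInf, if_neg hz]

lemma DGin_eq (n : ℕ) (hn : 0 < n) : DGin n = dGin n := by
  have hB1 : (muBarGin n (ball (0:ℂ) 1)).toReal = 1 - dGin n := by
    rw [muBar_ball, integral_ball_one n hn]
  have hI1 : (muInf (ball (0:ℂ) 1)).toReal = 1 := by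
    rw [muInf_ball, integral_hInf_ball_one]
  have hmem : dGin n ∈ {d : ℝ | ∃ (z₀ : ℂ) (R : ℝ), 0 < R ∧
      d = |(muBarGin n (ball z₀ R)).toReal - (muInf (ball z₀ R)).toReal|} := by
    refine ⟨0, 1, one_pos, ?_⟩
    rw [hB1, hI1]
    rw [show (1 : ℝ) - dGin n - 1 = -(dGin n) by ring, abs_neg, abs_of_nonneg (dGin_nonneg n)]
  have hub : ∀ d ∈ {d : ℝ | ∃ (z₀ : ℂ) (R : ℝ), 0 < R ∧
      d = |(muBarGin n (ball z₀ R)).toReal - (muInf (ball z₀ R)).toReal|}, d ≤ dGin n := by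
    rintro d ⟨z₀, R, hR, rfl⟩
    set B := ball z₀ R with hBdef
    set B₁ := ball (0:ℂ) 1 with hB₁def
    set R' := max 1 (R + ‖z₀‖) with hR'def
    set BR := ball (0:ℂ) R' with hBRdef
    have hR'1 : (1:ℝ) ≤ R' := le_max_left _ _
    have hR'0 : (0:ℝ) ≤ R' := le_trans zero_le_one hR'1
    have hBsub : B ⊆ BR := by
      apply ball_subset_ball'
      rw [dist_zero_right] at *
      exact le_max_right _ _
    have hB1sub : B₁ ⊆ BR := ball_subset_ball hR'1
    -- integrability
    have hρB : IntegrableOn (rhoGin n) B volume := rho_integrableOn n z₀ R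
    have hρBR : IntegrableOn (rhoGin n) BR volume := rho_integrableOn n 0 R'
    have hhB : IntegrableOn hInf B volume := hInf_integrable.integrableOn
    have hdiffB : IntegrableOn (fun z => rhoGin n z - hInf z) B volume := hρB.sub hhB
    -- measures to integrals
    rw [muBar_ball, muInf_ball, ← integral_sub hρB hhB]
    -- split the integral
    have hsplit : ∫ z in B, (rhoGin n z - hInf z)
        = (∫ z in B ∩ B₁, (rhoGin n z - hInf z)) + ∫ z in B \ B₁, (rhoGin n z - hInf z) :=
      (integral_inter_add_diff measurableSet_ball hdiffB).symm
    have hout : ∫ z in B \ B₁, (rhoGin n z - hInf z) = ∫ z in B \ B₁, rhoGin n z := by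
      apply setIntegral_congr_fun (measurableSet_ball.diff measurableSet_ball)
      intro z hz
      show rhoGin n z - hInf z = rhoGin n z
      rw [hInf_off_ball z hz.2, sub_zero]
    -- bound on the outer part
    have hTR : ∫ z in BR, rhoGin n z ≤ 1 := by
      rw [integral_ball_rho n hn hR'0]
      exact T_le_one n hn (by positivity)
    have hBRdiff : ∫ z in BR \ B₁, rhoGin n z = (∫ z in BR, rhoGin n z) - ∫ z in B₁, rhoGin n z :=
      integral_diff measurableSet_ball hρBR hB1sub
    have hout_le : ∫ z in B \ B₁, rhoGin n z ≤ dGin n := by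
      have h1 : ∫ z in B \ B₁, rhoGin n z ≤ ∫ z in BR \ B₁, rhoGin n z := by
        apply setIntegral_mono_set (hρBR.mono_set Set.diff_subset)
          (Filter.Eventually.of_forall fun z => rhoGin_nonneg n z)
        exact Filter.Eventually.of_forall fun z hz => ⟨hBsub hz.1, hz.2⟩
      rw [hBRdiff, integral_ball_one n hn] at h1
      linarith
    have hout_nonneg : 0 ≤ ∫ z in B \ B₁, rhoGin n z :=
      setIntegral_nonneg (measurableSet_ball.diff measurableSet_ball) fun z _ => rhoGin_nonneg n z
    -- bounds on the inner part
    have hin_nonpos : ∫ z in B ∩ B₁, (rhoGin n z - hInf z) ≤ 0 := by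
      apply setIntegral_nonpos (measurableSet_ball.inter measurableSet_ball)
      intro z hz
      show rhoGin n z - hInf z ≤ 0
      rw [hInf_on_ball z hz.2]
      linarith [rhoGin_le n z]
    have hin_ge : -(dGin n) ≤ ∫ z in B ∩ B₁, (rhoGin n z - hInf z) := by
      have hdiffB1 : IntegrableOn (fun z => rhoGin n z - hInf z) B₁ volume :=
        (rho_integrableOn n 0 1).sub hInf_integrable.integrableOn
      have hsplit1 : ∫ z in B₁, (rhoGin n z - hInf z)
          = (∫ z in B₁ ∩ B, (rhoGin n z - hInf z)) + ∫ z in B₁ \ B, (rhoGin n z - hInf z) :=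
        (integral_inter_add_diff measurableSet_ball hdiffB1).symm
      have hB1val : ∫ z in B₁, (rhoGin n z - hInf z) = -(dGin n) := by
        rw [integral_sub (rho_integrableOn n 0 1) hInf_integrable.integrableOn,
          integral_ball_one n hn, integral_hInf_ball_one]
        ring
      have hrest : ∫ z in B₁ \ B, (rhoGin n z - hInf z) ≤ 0 := by
        apply setIntegral_nonpos (measurableSet_ball.diff measurableSet_ball)
        intro z hz
        show rhoGin n z - hInf z ≤ 0
        rw [hInf_on_ball z hz.1]
        linarith [rhoGin_le n z]
      rw [Set.inter_comm B B₁]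
      rw [hB1val] at hsplit1
      linarith
    rw [hsplit, hout]
    rw [abs_le]
    constructor <;> linarith
  rw [DGin]
  exact IsGreatest.csSup_eq ⟨hmem, hub⟩


/-- `lim_{n→∞} √(2πn) · D(μ̄_n, μ_∞) = 1`. -/
theorem stmt0 :
    Filter.Tendsto (fun n : ℕ => Real.sqrt (2 * Real.pi * n) * DGin n)
      Filter.atTop (nhds 1) := by
  have hπ : (0:ℝ) < Real.sqrt Real.pi := Real.sqrt_pos.2 Real.pi_pos
  have h1 : Filter.Tendsto (fun n : ℕ => Real.sqrt Real.pi / Stirling.stirlingSeq n)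
      Filter.atTop (nhds 1) := by
    have h2 := Filter.Tendsto.div (tendsto_const_nhds (x := Real.sqrt Real.pi))
      Stirling.tendsto_stirlingSeq_sqrt_pi hπ.ne'
    rwa [div_self hπ.ne'] at h2
  apply Filter.Tendsto.congr' _ h1
  filter_upwards [Filter.eventually_ge_atTop 1] with n hn
  rw [DGin_eq n hn, dGin, Stirling.stirlingSeq]
  have hn0 : (0:ℝ) < (n:ℝ) := by exact_mod_cast hn
  have hsqrt : Real.sqrt (2 * Real.pi * n) = Real.sqrt Real.pi * Real.sqrt (2 * n) := by
    rw [← Real.sqrt_mul Real.pi_pos.le]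
    congr 1
    ring
  have hexp : Real.exp (-(n : ℝ)) = (Real.exp 1 ^ n)⁻¹ := by
    rw [show -(n:ℝ) = (n : ℕ) * (-1 : ℝ) by push_cast; ring, Real.exp_nat_mul, Real.exp_neg,
      inv_pow]
  rw [hsqrt, hexp]
  have hfac : ((Nat.factorial n : ℝ)) ≠ 0 := Nat.cast_ne_zero.2 (Nat.factorial_ne_zero n)
  have hs2n : (0:ℝ) < Real.sqrt (2 * n) := Real.sqrt_pos.2 (by positivity)
  have hexp1 : (0:ℝ) < Real.exp 1 := Real.exp_pos 1
  rw [div_div_eq_mul_div, div_pow]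
  field_simp
end

section
/- Fix integers m ≥ 1 and n ≥ 1. For every z ∈ ℂ with z ≠ 0, the density ρ_n^m satisfies the double contour integral representation ρ_n^m(z) = (1/(n(2πi)²)) ∮_{γ_n} [ ∫_ℝ (Γ(1/2+iu)/Γ(t))^m · n^{m(t − 1/2 − iu)} · |z|^{2(t − 3/2 − iu)} · i du ] · cot(πt) dt, where γ_n is the positively oriented boundary of the rectangle with vertices 3/4 − i, n + 1/4 − i, n + 1/4 + i, 3/4 + i (the inner integral being the contour integral over the vertical line Re(s) = 1/2 after parametrizing s = 1/2 + iu). -/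
open MeasureTheory Metric

/-- The Meijer G-function `G^{m,0}_{0,m}` along the inverse-Mellin contour `Re s = 1/2`:
`G_m(x) = (1/(2π)) ∫_ℝ Γ(1/2+iu)^m x^{-(1/2+iu)} du` (a real number; we take the real part
of the complex integral). For `m = 1`, `G_1(x) = e^{-x}`. -/
noncomputable def Gm (m : ℕ) (x : ℝ) : ℝ :=
  (1 / (2 * Real.pi)) *
    (∫ u : ℝ, Complex.Gamma (1 / 2 + u * Complex.I) ^ m *
      (x : ℂ) ^ (-(1 / 2 + u * Complex.I))).re

/-- The density `ρ_n^m(z) = n^{m−1} Σ_{k=0}^{n−1} (n^m|z|²)^k/(π (k!)^m) · G_m(n^m|z|²)`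
of the mean empirical spectral distribution of a product of `m` independent normalized
Ginibre matrices. -/
noncomputable def rhoProd (m n : ℕ) (z : ℂ) : ℝ :=
  (n : ℝ) ^ (m - 1) *
    ∑ k ∈ Finset.range n,
      ((n : ℝ) ^ m * ‖z‖ ^ 2) ^ k / (Real.pi * (Nat.factorial k : ℝ) ^ m) *
        Gm m ((n : ℝ) ^ m * ‖z‖ ^ 2)

/-- The mean empirical spectral distribution `μ̄_n^m`. -/
noncomputable def muBarProd (m n : ℕ) : Measure ℂ :=
  volume.withDensity fun z => ENNReal.ofReal (rhoProd m n z)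

/-- The `m`-th power of the Circular Law `μ_∞^m`, with Lebesgue density
`|z|^{2/m−2}/(πm)` on the open unit ball and `0` elsewhere. -/
noncomputable def muInfProd (m : ℕ) : Measure ℂ :=
  volume.withDensity fun z =>
    ENNReal.ofReal
      (if ‖z‖ < 1 then ‖z‖ ^ ((2 : ℝ) / m - 2) / (Real.pi * m) else 0)

/-- The contour integral over the positively oriented boundary `γ_n` of the rectangle with
vertices `3/4 − i`, `n + 1/4 − i`, `n + 1/4 + i`, `3/4 + i`: the sum of the four integrals
over its oriented sides. -/
noncomputable def rectContour (n : ℕ) (g : ℂ → ℂ) : ℂ :=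
  (∫ x in (3 / 4 : ℝ)..((n : ℝ) + 1 / 4), g ((x : ℂ) - Complex.I)) +
    (∫ y in (-1 : ℝ)..(1 : ℝ), g (((n : ℝ) + 1 / 4 : ℝ) + (y : ℂ) * Complex.I) * Complex.I) -
    (∫ x in (3 / 4 : ℝ)..((n : ℝ) + 1 / 4), g ((x : ℂ) + Complex.I)) -
    (∫ y in (-1 : ℝ)..(1 : ℝ), g ((3 / 4 : ℝ) + (y : ℂ) * Complex.I) * Complex.I)

def RectIntegrable (n : ℕ) (F : ℂ → ℂ) : Prop :=
  IntervalIntegrable (fun x : ℝ => F ((x:ℂ) - Complex.I)) volume (3/4) ((n:ℝ) + 1/4) ∧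
  IntervalIntegrable (fun x : ℝ => F ((x:ℂ) + Complex.I)) volume (3/4) ((n:ℝ) + 1/4) ∧
  IntervalIntegrable (fun y : ℝ => F ((((n:ℝ) + 1/4 : ℝ):ℂ) + (y:ℂ) * Complex.I)) volume (-1) 1 ∧
  IntervalIntegrable (fun y : ℝ => F (((3/4 : ℝ):ℂ) + (y:ℂ) * Complex.I)) volume (-1) 1

lemma rectContour_congr (n : ℕ) (F G : ℂ → ℂ)
    (h : ∀ t : ℂ, (t.im = -1 ∨ t.im = 1 ∨ t.re = 3/4 ∨ t.re = (n:ℝ) + 1/4) → F t = G t) :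
    rectContour n F = rectContour n G := by
  unfold rectContour
  have e1 : (∫ x in (3/4:ℝ)..((n:ℝ)+1/4), F ((x:ℂ) - Complex.I))
      = ∫ x in (3/4:ℝ)..((n:ℝ)+1/4), G ((x:ℂ) - Complex.I) :=
    intervalIntegral.integral_congr fun x _ => h _ (Or.inl (by simp))
  have e2 : (∫ x in (3/4:ℝ)..((n:ℝ)+1/4), F ((x:ℂ) + Complex.I))
      = ∫ x in (3/4:ℝ)..((n:ℝ)+1/4), G ((x:ℂ) + Complex.I) :=
    intervalIntegral.integral_congr fun x _ => h _ (Or.inr (Or.inl (by simp)))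
  have e3 : (∫ y in (-1:ℝ)..(1:ℝ), F ((((n:ℝ) + 1/4 : ℝ):ℂ) + (y:ℂ) * Complex.I) * Complex.I)
      = ∫ y in (-1:ℝ)..(1:ℝ), G ((((n:ℝ) + 1/4 : ℝ):ℂ) + (y:ℂ) * Complex.I) * Complex.I :=
    intervalIntegral.integral_congr fun y _ => by
      rw [h _ (Or.inr (Or.inr (Or.inr (by simp))))]
  have e4 : (∫ y in (-1:ℝ)..(1:ℝ), F (((3/4 : ℝ):ℂ) + (y:ℂ) * Complex.I) * Complex.I)
      = ∫ y in (-1:ℝ)..(1:ℝ), G (((3/4 : ℝ):ℂ) + (y:ℂ) * Complex.I) * Complex.I :=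
    intervalIntegral.integral_congr fun y _ => by
      rw [h _ (Or.inr (Or.inr (Or.inl (by simp))))]
  rw [e1, e2, e3, e4]

lemma rectContour_const_mul (n : ℕ) (c : ℂ) (F : ℂ → ℂ) :
    rectContour n (fun t => c * F t) = c * rectContour n F := by
  unfold rectContour
  simp only [mul_assoc, intervalIntegral.integral_const_mul]
  ring

lemma rectContour_sub (n : ℕ) (F G : ℂ → ℂ) (hF : RectIntegrable n F)
    (hG : RectIntegrable n G) :
    rectContour n (fun t => F t - G t) = rectContour n F - rectContour n G := by
  unfold rectContour
  simp only [sub_mul]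
  rw [intervalIntegral.integral_sub hF.1 hG.1,
    intervalIntegral.integral_sub hF.2.1 hG.2.1,
    intervalIntegral.integral_sub (hF.2.2.1.mul_const Complex.I) (hG.2.2.1.mul_const Complex.I),
    intervalIntegral.integral_sub (hF.2.2.2.mul_const Complex.I) (hG.2.2.2.mul_const Complex.I)]
  ring

lemma rectContour_sum (n : ℕ) {ι : Type*} (s : Finset ι) (F : ι → ℂ → ℂ)
    (h : ∀ i ∈ s, RectIntegrable n (F i)) :
    rectContour n (fun t => ∑ i ∈ s, F i t) = ∑ i ∈ s, rectContour n (F i) := by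
  unfold rectContour
  simp only [Finset.sum_mul]
  rw [intervalIntegral.integral_finset_sum (fun i hi => (h i hi).1),
    intervalIntegral.integral_finset_sum (fun i hi => (h i hi).2.1),
    intervalIntegral.integral_finset_sum (fun i hi => (h i hi).2.2.1.mul_const Complex.I),
    intervalIntegral.integral_finset_sum (fun i hi => (h i hi).2.2.2.mul_const Complex.I)]
  rw [← Finset.sum_add_distrib, ← Finset.sum_sub_distrib, ← Finset.sum_sub_distrib]

lemma rectIntegrable_of (n : ℕ) (hn : 1 ≤ n) (F : ℂ → ℂ)
    (h : ∀ t : ℂ, 3/4 ≤ t.re → t.re ≤ (n:ℝ) + 1/4 → -1 ≤ t.im → t.im ≤ 1 →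
      (t.im = -1 ∨ t.im = 1 ∨ t.re = 3/4 ∨ t.re = (n:ℝ) + 1/4) → ContinuousAt F t) :
    RectIntegrable n F := by
  have hbound : (3:ℝ)/4 ≤ (n:ℝ) + 1/4 := by
    have h1 : (1:ℝ) ≤ n := by exact_mod_cast hn
    linarith
  refine ⟨?_, ?_, ?_, ?_⟩
  · apply ContinuousOn.intervalIntegrable
    intro x hx
    rw [Set.uIcc_of_le hbound] at hx
    exact ((h _ (by simpa using hx.1) (by simpa using hx.2) (by simp) (by simp)
      (Or.inl (by simp))).comp (by fun_prop)).continuousWithinAt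
  · apply ContinuousOn.intervalIntegrable
    intro x hx
    rw [Set.uIcc_of_le hbound] at hx
    exact ((h _ (by simpa using hx.1) (by simpa using hx.2) (by simp) (by simp)
      (Or.inr (Or.inl (by simp)))).comp (by fun_prop)).continuousWithinAt
  · apply ContinuousOn.intervalIntegrable
    intro y hy
    rw [Set.uIcc_of_le (by norm_num : (-1:ℝ) ≤ 1)] at hy
    exact ((h _ (by simpa using hbound) (by simp) (by simpa using hy.1) (by simpa using hy.2)
      (Or.inr (Or.inr (Or.inr (by simp))))).comp (by fun_prop)).continuousWithinAt
  · apply ContinuousOn.intervalIntegrable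
    intro y hy
    rw [Set.uIcc_of_le (by norm_num : (-1:ℝ) ≤ 1)] at hy
    exact ((h _ (by simp) (by simpa using hbound) (by simpa using hy.1) (by simpa using hy.2)
      (Or.inr (Or.inr (Or.inl (by simp))))).comp (by fun_prop)).continuousWithinAt

lemma sin_pi_mul_eq_zero_iff (t : ℂ) :
    Complex.sin ((Real.pi:ℂ) * t) = 0 ↔ ∃ j : ℤ, t = (j:ℂ) := by
  rw [Complex.sin_eq_zero_iff]
  have hπ : (Real.pi : ℂ) ≠ 0 := Complex.ofReal_ne_zero.mpr Real.pi_ne_zero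
  constructor
  · rintro ⟨j, hj⟩
    exact ⟨j, mul_left_cancel₀ hπ (by rw [hj]; ring)⟩
  · rintro ⟨j, rfl⟩
    exact ⟨j, by ring⟩

lemma Gamma_diff_ne {t : ℂ} (ht : 0 < t.re) :
    DifferentiableAt ℂ Complex.Gamma t ∧ Complex.Gamma t ≠ 0 := by
  have harg : ∀ j : ℕ, t ≠ -(j:ℂ) := by
    intro j h
    rw [h] at ht
    simp only [Complex.neg_re, Complex.natCast_re] at ht
    have h2 : (0:ℝ) ≤ j := j.cast_nonneg
    linarith
  exact ⟨Complex.differentiableAt_Gamma t harg, Complex.Gamma_ne_zero harg⟩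

lemma phi_diff (m : ℕ) (L : ℝ) {t : ℂ} (ht : 0 < t.re) :
    DifferentiableAt ℂ (fun s : ℂ => Complex.exp ((L:ℂ) * s) * ((Complex.Gamma s)^m)⁻¹) t := by
  obtain ⟨hd, hne⟩ := Gamma_diff_ne ht
  exact ((differentiableAt_id.const_mul _).cexp).mul ((hd.pow m).inv (pow_ne_zero _ hne))

lemma cot_diff {t : ℂ} (h : Complex.sin ((Real.pi:ℂ) * t) ≠ 0) :
    DifferentiableAt ℂ (fun s : ℂ => Complex.cot ((Real.pi:ℂ) * s)) t := by
  simp only [Complex.cot_eq_cos_div_sin]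
  have h1 : DifferentiableAt ℂ (fun s : ℂ => Complex.cos ((Real.pi:ℂ) * s)) t :=
    (Complex.differentiable_cos.differentiableAt).comp t (differentiableAt_id.const_mul _)
  have h2 : DifferentiableAt ℂ (fun s : ℂ => Complex.sin ((Real.pi:ℂ) * s)) t :=
    (Complex.differentiable_sin.differentiableAt).comp t (differentiableAt_id.const_mul _)
  exact h1.div h2 h

lemma side_sin_ne (n : ℕ) (t : ℂ)
    (hside : t.im = -1 ∨ t.im = 1 ∨ t.re = 3/4 ∨ t.re = (n:ℝ) + 1/4) :
    Complex.sin ((Real.pi:ℂ) * t) ≠ 0 := by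
  intro h0
  obtain ⟨j, rfl⟩ := (sin_pi_mul_eq_zero_iff t).mp h0
  rcases hside with h | h | h | h
  · rw [Complex.intCast_im] at h; norm_num at h
  · rw [Complex.intCast_im] at h; norm_num at h
  · rw [Complex.intCast_re] at h
    have h1 : (4:ℝ) * j = 3 := by linarith
    have h2 : (4:ℤ) * j = 3 := by exact_mod_cast h1
    omega
  · rw [Complex.intCast_re] at h
    have h1 : (4:ℝ) * j = 4 * n + 1 := by linarith
    have h2 : (4:ℤ) * j = 4 * n + 1 := by exact_mod_cast h1
    omega

lemma side_ne_nat (n : ℕ) (t : ℂ)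
    (hside : t.im = -1 ∨ t.im = 1 ∨ t.re = 3/4 ∨ t.re = (n:ℝ) + 1/4)
    (j : ℕ) (hj1 : 1 ≤ j) (hjn : j ≤ n) : t ≠ (j:ℂ) := by
  rintro rfl
  have hj1' : (1:ℝ) ≤ j := by exact_mod_cast hj1
  have hjn' : (j:ℝ) ≤ n := by exact_mod_cast hjn
  rcases hside with h | h | h | h
  · rw [Complex.natCast_im] at h; norm_num at h
  · rw [Complex.natCast_im] at h; norm_num at h
  · rw [Complex.natCast_re] at h; linarith
  · rw [Complex.natCast_re] at h; linarith

lemma ne_of_im {w : ℂ} (h : w.im ≠ 0) : w ≠ 0 := fun h0 => h (by rw [h0]; simp)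

lemma horiz_int (a b : ℝ) (w : ℂ) (hw : w.im ≠ 0) :
    ∫ x in a..b, ((x : ℂ) + w)⁻¹ =
      Complex.log ((b : ℂ) + w) - Complex.log ((a : ℂ) + w) := by
  have hcont : Continuous (fun x : ℝ => ((x : ℂ) + w)⁻¹) := by
    apply Continuous.inv₀ (by continuity)
    intro x
    exact ne_of_im (by simpa using hw)
  have := intervalIntegral.integral_eq_sub_of_hasDerivAt
    (f := fun x : ℝ => Complex.log ((x : ℂ) + w))
    (f' := fun x : ℝ => ((x : ℂ) + w)⁻¹)
    (a := a) (b := b) (fun x _ => ?_) (hcont.intervalIntegrable _ _)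
  · exact this
  have hs : ((x : ℂ) + w) ∈ Complex.slitPlane := by
    rw [Complex.mem_slitPlane_iff]
    right; simpa using hw
  have h1 : HasDerivAt (fun z : ℂ => Complex.log (z + w)) ((x : ℂ) + w)⁻¹ (x : ℂ) := by
    simpa [Function.comp_def] using (Complex.hasDerivAt_log hs).comp (x : ℂ)
      ((hasDerivAt_id (x : ℂ)).add_const w)
  exact h1.comp_ofReal

lemma vert_int_pos (c : ℝ) (hc : 0 < c) :
    ∫ y in (-1 : ℝ)..(1 : ℝ), ((c : ℂ) + (y : ℂ) * Complex.I)⁻¹ * Complex.I =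
      Complex.log ((c : ℂ) + Complex.I) - Complex.log ((c : ℂ) - Complex.I) := by
  have hcont : Continuous (fun y : ℝ => ((c : ℂ) + (y : ℂ) * Complex.I)⁻¹ * Complex.I) := by
    apply Continuous.mul _ continuous_const
    apply Continuous.inv₀ (by continuity)
    intro y h0
    have : ((c : ℂ) + (y : ℂ) * Complex.I).re = c := by simp
    rw [h0] at this
    simp at this
    exact hc.ne this
  have := intervalIntegral.integral_eq_sub_of_hasDerivAt
    (f := fun y : ℝ => Complex.log ((c : ℂ) + (y : ℂ) * Complex.I))
    (f' := fun y : ℝ => ((c : ℂ) + (y : ℂ) * Complex.I)⁻¹ * Complex.I)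
    (a := (-1 : ℝ)) (b := 1) (fun y _ => ?_) (hcont.intervalIntegrable _ _)
  · rw [this]
    push_cast
    ring_nf
  · have hs : ((c : ℂ) + (y : ℂ) * Complex.I) ∈ Complex.slitPlane := by
      rw [Complex.mem_slitPlane_iff]; left; simpa using hc
    have h1 : HasDerivAt (fun z : ℂ => Complex.log ((c : ℂ) + z * Complex.I))
        (((c : ℂ) + (y : ℂ) * Complex.I)⁻¹ * Complex.I) (y : ℂ) := by
      simpa [Function.comp_def] using (Complex.hasDerivAt_log hs).comp (y : ℂ)
        (((hasDerivAt_id ((y : ℝ) : ℂ)).mul_const Complex.I).const_add (c : ℂ))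
    exact h1.comp_ofReal

lemma vert_int_neg (c : ℝ) (hc : 0 < c) :
    ∫ y in (-1 : ℝ)..(1 : ℝ), (-(c : ℂ) + (y : ℂ) * Complex.I)⁻¹ * Complex.I =
      Complex.log ((c : ℂ) - Complex.I) - Complex.log ((c : ℂ) + Complex.I) := by
  have hcont : Continuous (fun y : ℝ => (-(c : ℂ) + (y : ℂ) * Complex.I)⁻¹ * Complex.I) := by
    apply Continuous.mul _ continuous_const
    apply Continuous.inv₀ (by continuity)
    intro y h0
    have : ((-(c : ℂ) + (y : ℂ) * Complex.I).re) = -c := by simp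
    rw [h0] at this
    simp at this
    exact hc.ne this.symm
  have := intervalIntegral.integral_eq_sub_of_hasDerivAt
    (f := fun y : ℝ => Complex.log ((c : ℂ) - (y : ℂ) * Complex.I))
    (f' := fun y : ℝ => (-(c : ℂ) + (y : ℂ) * Complex.I)⁻¹ * Complex.I)
    (a := (-1 : ℝ)) (b := 1) (fun y _ => ?_) (hcont.intervalIntegrable _ _)
  · rw [this]
    push_cast
    ring_nf
  · have hs : ((c : ℂ) - (y : ℂ) * Complex.I) ∈ Complex.slitPlane := by
      rw [Complex.mem_slitPlane_iff]; left; simpa using hc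
    have h1 : HasDerivAt (fun z : ℂ => Complex.log ((c : ℂ) - z * Complex.I))
        ((-(c : ℂ) + (y : ℂ) * Complex.I)⁻¹ * Complex.I) (y : ℂ) := by
      have h2 : HasDerivAt (fun z : ℂ => (c : ℂ) - z * Complex.I) (-Complex.I) (y : ℂ) := by
        simpa using ((hasDerivAt_id ((y : ℝ) : ℂ)).mul_const Complex.I).const_sub (c : ℂ)
      have := (Complex.hasDerivAt_log hs).comp (y : ℂ) h2
      refine this.congr_deriv ?_
      rw [show (-(c:ℂ) + (y:ℂ) * Complex.I) = -((c:ℂ) - (y:ℂ)*Complex.I) by ring]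
      rw [inv_neg]
      ring
    exact h1.comp_ofReal

lemma logsum (c : ℝ) :
    (Complex.log (-(c:ℂ) + Complex.I) - Complex.log (-(c:ℂ) - Complex.I)) +
      (Complex.log ((c:ℂ) + Complex.I) - Complex.log ((c:ℂ) - Complex.I)) =
      2 * Real.pi * Complex.I := by
  have harg : ((c:ℂ) + Complex.I).arg ≠ Real.pi := by
    simp [Complex.arg_eq_pi_iff]
  have harg2 : (-(c:ℂ) + Complex.I).arg ≠ Real.pi := by
    simp [Complex.arg_eq_pi_iff]
  have hconj1 : (starRingEnd ℂ) ((c:ℂ) + Complex.I) = (c:ℂ) - Complex.I := by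
    rw [map_add, Complex.conj_ofReal, Complex.conj_I]; ring
  have hconj2 : (starRingEnd ℂ) (-(c:ℂ) + Complex.I) = -(c:ℂ) - Complex.I := by
    rw [map_add, map_neg, Complex.conj_ofReal, Complex.conj_I]; ring
  have e1 : Complex.log ((c:ℂ) - Complex.I) = (starRingEnd ℂ) (Complex.log ((c:ℂ) + Complex.I)) := by
    rw [← hconj1, Complex.log_conj _ harg]
  have e2 : Complex.log (-(c:ℂ) - Complex.I)
      = (starRingEnd ℂ) (Complex.log (-(c:ℂ) + Complex.I)) := by
    rw [← hconj2, Complex.log_conj _ harg2]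
  rw [e1, e2, Complex.sub_conj, Complex.sub_conj, Complex.log_im, Complex.log_im]
  have harg3 : (-(c:ℂ) + Complex.I).arg = Real.pi - ((c:ℂ) + Complex.I).arg := by
    have him : ((c:ℂ) - Complex.I).im < 0 := by simp
    have h4 : (-((c:ℂ) - Complex.I)) = -(c:ℂ) + Complex.I := by ring
    have h5 := Complex.arg_neg_eq_arg_add_pi_of_im_neg him
    rw [h4] at h5
    rw [h5, ← hconj1, Complex.arg_conj]
    simp [harg]
    ring
  rw [harg3]
  push_cast
  ring

lemma rect_inv (n k : ℕ) (hk1 : 1 ≤ k) (hkn : k ≤ n) :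
    rectContour n (fun t => (t - (k : ℂ))⁻¹) = 2 * Real.pi * Complex.I := by
  have hc : (0:ℝ) < (k:ℝ) - 3/4 := by
    have : (1:ℝ) ≤ k := by exact_mod_cast hk1
    linarith
  have hd : (0:ℝ) < (n:ℝ) + 1/4 - k := by
    have : (k:ℝ) ≤ n := by exact_mod_cast hkn
    linarith
  set c : ℝ := (k:ℝ) - 3/4 with hcdef
  set d : ℝ := (n:ℝ) + 1/4 - k with hddef
  unfold rectContour
  have hB : (∫ x in (3/4:ℝ)..((n:ℝ) + 1/4), ((x:ℂ) - Complex.I - (k:ℂ))⁻¹)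
      = Complex.log ((d:ℂ) - Complex.I) - Complex.log (-(c:ℂ) - Complex.I) := by
    have e : ∀ x : ℝ, ((x:ℂ) - Complex.I - (k:ℂ)) = ((x:ℂ) + (-(k:ℂ) - Complex.I)) :=
      fun x => by ring
    simp_rw [e]
    rw [horiz_int _ _ _ (by simp)]
    congr 1 <;> · congr 1; push_cast [hcdef, hddef]; ring
  have hT : (∫ x in (3/4:ℝ)..((n:ℝ) + 1/4), ((x:ℂ) + Complex.I - (k:ℂ))⁻¹)
      = Complex.log ((d:ℂ) + Complex.I) - Complex.log (-(c:ℂ) + Complex.I) := by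
    have e : ∀ x : ℝ, ((x:ℂ) + Complex.I - (k:ℂ)) = ((x:ℂ) + (-(k:ℂ) + Complex.I)) :=
      fun x => by ring
    simp_rw [e]
    rw [horiz_int _ _ _ (by simp)]
    congr 1 <;> · congr 1; push_cast [hcdef, hddef]; ring
  have hR : (∫ y in (-1:ℝ)..(1:ℝ), (((((n:ℝ) + 1/4 : ℝ)):ℂ) + (y:ℂ) * Complex.I - (k:ℂ))⁻¹
        * Complex.I)
      = Complex.log ((d:ℂ) + Complex.I) - Complex.log ((d:ℂ) - Complex.I) := by
    have e : ∀ y : ℝ, (((((n:ℝ) + 1/4 : ℝ)):ℂ) + (y:ℂ) * Complex.I - (k:ℂ))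
        = ((d:ℂ) + (y:ℂ) * Complex.I) := fun y => by push_cast [hddef]; ring
    simp_rw [e]
    exact vert_int_pos d hd
  have hL : (∫ y in (-1:ℝ)..(1:ℝ), ((((3/4 : ℝ)):ℂ) + (y:ℂ) * Complex.I - (k:ℂ))⁻¹
        * Complex.I)
      = Complex.log ((c:ℂ) - Complex.I) - Complex.log ((c:ℂ) + Complex.I) := by
    have e : ∀ y : ℝ, ((((3/4 : ℝ)):ℂ) + (y:ℂ) * Complex.I - (k:ℂ))
        = (-(c:ℂ) + (y:ℂ) * Complex.I) := fun y => by push_cast [hcdef]; ring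
    simp_rw [e]
    exact vert_int_neg c hc
  rw [hB, hT, hR, hL]
  linear_combination (logsum c)

lemma core (m n : ℕ) (hn : 1 ≤ n) (L : ℝ) :
    rectContour n (fun t => Complex.exp ((L:ℂ) * t) * ((Complex.Gamma t)^m)⁻¹ *
        Complex.cot ((Real.pi:ℂ) * t)) =
      2 * Complex.I * ∑ k ∈ Finset.Icc 1 n,
        Complex.exp ((L:ℂ) * k) * ((Complex.Gamma (k:ℂ))^m)⁻¹ := by
  classical
  have hπ : (Real.pi : ℂ) ≠ 0 := Complex.ofReal_ne_zero.mpr Real.pi_ne_zero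
  set Φ : ℂ → ℂ := fun t => Complex.exp ((L:ℂ) * t) * ((Complex.Gamma t)^m)⁻¹ with hΦ
  set S : ℂ → ℂ := fun t => ∑ k ∈ Finset.Icc 1 n, Φ (k:ℂ) * ((Real.pi:ℂ) * (t - (k:ℕ)))⁻¹
    with hS
  set g : ℂ → ℂ := fun t => Φ t * Complex.cot ((Real.pi:ℂ) * t) - S t with hg
  -- differentiability of g away from poles
  have hgdiff : ∀ t : ℂ, 0 < t.re → Complex.sin ((Real.pi:ℂ) * t) ≠ 0 →
      (∀ j ∈ Finset.Icc 1 n, t ≠ (j:ℂ)) → DifferentiableAt ℂ g t := by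
    intro t h1 h2 h3
    apply DifferentiableAt.sub
    · exact (phi_diff m L h1).mul (cot_diff h2)
    · apply DifferentiableAt.fun_sum
      intro j hj
      refine (differentiableAt_const _).mul (DifferentiableAt.inv ?_ ?_)
      · exact (differentiableAt_id.sub_const _).const_mul _
      · exact mul_ne_zero hπ (sub_ne_zero.mpr (h3 j hj))
  -- strip membership
  have hsin_ne : ∀ t : ℂ, 1/2 < t.re → t.re < (n:ℝ) + 1/2 →
      (∀ j ∈ Finset.Icc 1 n, t ≠ (j:ℂ)) → Complex.sin ((Real.pi:ℂ) * t) ≠ 0 := by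
    intro t h1 h2 h3 h0
    obtain ⟨j, rfl⟩ := (sin_pi_mul_eq_zero_iff t).mp h0
    rw [Complex.intCast_re] at h1 h2
    have hj0 : 0 < j := by
      have h4 : (0:ℝ) < j := lt_trans (by norm_num) h1
      exact_mod_cast h4
    have hjn : j ≤ (n:ℤ) := by
      have h4 : (j:ℝ) < (n:ℝ) + 1 := by linarith
      have h5 : j < (n:ℤ) + 1 := by exact_mod_cast h4
      omega
    have hcast : ((j.toNat : ℕ):ℂ) = ((j:ℤ):ℂ) := by
      exact_mod_cast congrArg (fun z : ℤ => (z:ℂ)) (Int.toNat_of_nonneg hj0.le)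
    exact h3 j.toNat (Finset.mem_Icc.mpr (by omega)) hcast.symm
  -- ball facts
  have hball_avoid : ∀ k ∈ Finset.Icc 1 n, ∀ t : ℂ, t ∈ ball ((k:ℕ):ℂ) (1/2) → t ≠ (k:ℂ) →
      (0 < t.re ∧ (∀ j ∈ Finset.Icc 1 n, t ≠ (j:ℂ)) ∧
        Complex.sin ((Real.pi:ℂ) * t) ≠ 0) := by
    intro k hk t ht htk
    obtain ⟨hk1, hkn⟩ := Finset.mem_Icc.mp hk
    have hk1' : (1:ℝ) ≤ k := by exact_mod_cast hk1
    have hdist : ‖t - (k:ℂ)‖ < 1/2 := by rwa [mem_ball, Complex.dist_eq] at ht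
    have habs : ∀ w : ℂ, ‖t - (k:ℂ)‖ = w → True := fun _ _ => trivial
    have hre : |t.re - (k:ℝ)| < 1/2 := by
      have h5 := lt_of_le_of_lt (Complex.abs_re_le_norm (t - (k:ℂ))) hdist
      simpa using h5
    have hre1 : (k:ℝ) - 1/2 < t.re := by have := abs_lt.mp hre; linarith [this.1]
    have hre2 : t.re < (k:ℝ) + 1/2 := by have := abs_lt.mp hre; linarith [this.2]
    have hint : ∀ x : ℝ, (∃ i : ℤ, x = i) → |x - (k:ℝ)| < 1/2 → x = (k:ℝ) := by
      rintro x ⟨i, rfl⟩ hxk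
      have h6 : |(i:ℝ) - (k:ℝ)| < 1/2 := hxk
      by_contra hne
      have hne' : i ≠ (k:ℤ) := fun h => hne (by exact_mod_cast h)
      have h7 : (1:ℤ) ≤ |i - (k:ℤ)| := by
        have h7a := abs_pos.mpr (sub_ne_zero.mpr hne')
        omega
      have h8 : (1:ℝ) ≤ |(i:ℝ) - (k:ℝ)| := by
        calc (1:ℝ) = ((1:ℤ):ℝ) := by norm_num
        _ ≤ (|i - (k:ℤ)| : ℤ) := by exact_mod_cast h7
        _ = |(i:ℝ) - (k:ℝ)| := by push_cast; ring_nf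
      linarith
    refine ⟨by linarith, ?_, ?_⟩
    · intro j hj hteq
      obtain ⟨hj1, hjn2⟩ := Finset.mem_Icc.mp hj
      rw [hteq] at hdist
      have h9 : ‖(j:ℂ) - (k:ℂ)‖ = |(j:ℝ) - (k:ℝ)| := by
        rw [show ((j:ℂ) - (k:ℂ)) = (((j:ℝ) - (k:ℝ) : ℝ) : ℂ) by push_cast; ring,
          Complex.norm_real, Real.norm_eq_abs]
      rw [h9] at hdist
      have h10 : (j:ℝ) = (k:ℝ) := hint (j:ℝ) ⟨(j:ℤ), by push_cast; ring⟩ hdist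
      have h11 : j = k := by exact_mod_cast h10
      exact htk (by rw [hteq, h11])
    · intro h0
      obtain ⟨i, hti⟩ := (sin_pi_mul_eq_zero_iff t).mp h0
      rw [hti] at hdist
      have h9 : ‖(i:ℂ) - (k:ℂ)‖ = |(i:ℝ) - (k:ℝ)| := by
        rw [show ((i:ℂ) - (k:ℂ)) = (((i:ℝ) - (k:ℝ) : ℝ) : ℂ) by push_cast; ring,
          Complex.norm_real, Real.norm_eq_abs]
      rw [h9] at hdist
      have h10 : (i:ℝ) = (k:ℝ) := hint (i:ℝ) ⟨i, rfl⟩ hdist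
      have h11 : i = (k:ℤ) := by exact_mod_cast h10
      exact htk (by rw [hti, h11]; push_cast; ring)
  -- littleO
  have hlittleO : ∀ k ∈ Finset.Icc 1 n,
      (fun t => g t - g ((k:ℕ):ℂ)) =o[nhdsWithin ((k:ℕ):ℂ) {((k:ℕ):ℂ)}ᶜ]
        fun t => (t - ((k:ℕ):ℂ))⁻¹ := by
    intro k hk
    obtain ⟨hk1, hkn⟩ := Finset.mem_Icc.mp hk
    have hkpos : (0:ℝ) < k := by
      have : (1:ℝ) ≤ k := by exact_mod_cast hk1
      linarith
    have hsin0 : Complex.sin ((Real.pi:ℂ) * ((k:ℕ):ℂ)) = 0 :=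
      (sin_pi_mul_eq_zero_iff ((k:ℕ):ℂ)).mpr ⟨(k:ℤ), by push_cast; ring⟩
    have hcos0 : Complex.cos ((Real.pi:ℂ) * ((k:ℕ):ℂ)) ≠ 0 := by
      intro h0
      have h1 := Complex.sin_sq_add_cos_sq ((Real.pi:ℂ) * ((k:ℕ):ℂ))
      rw [hsin0, h0] at h1
      simp at h1
    have hderiv : HasDerivAt (fun t : ℂ => Complex.sin ((Real.pi:ℂ) * t))
        ((Real.pi:ℂ) * Complex.cos ((Real.pi:ℂ) * ((k:ℕ):ℂ))) ((k:ℕ):ℂ) := by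
      have h1 : HasDerivAt (fun t : ℂ => Complex.sin ((Real.pi:ℂ) * t))
          (Complex.cos ((Real.pi:ℂ) * ((k:ℕ):ℂ)) * ((Real.pi:ℂ) * 1)) ((k:ℕ):ℂ) :=
        (Complex.hasDerivAt_sin ((Real.pi:ℂ) * ((k:ℕ):ℂ))).comp ((k:ℕ):ℂ)
          ((hasDerivAt_id ((k:ℕ):ℂ)).const_mul (Real.pi:ℂ))
      convert h1 using 1
      ring
    have hslope : Filter.Tendsto (fun t : ℂ => Complex.sin ((Real.pi:ℂ) * t) / (t - ((k:ℕ):ℂ)))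
        (nhdsWithin ((k:ℕ):ℂ) {((k:ℕ):ℂ)}ᶜ)
        (nhds ((Real.pi:ℂ) * Complex.cos ((Real.pi:ℂ) * ((k:ℕ):ℂ)))) := by
      have h1 := hasDerivAt_iff_tendsto_slope.mp hderiv
      refine h1.congr fun t => ?_
      rw [slope_def_field, hsin0, sub_zero]
    have hΦcont : ContinuousAt Φ ((k:ℕ):ℂ) :=
      (phi_diff m L (t := ((k:ℕ):ℂ)) (by rw [Complex.natCast_re]; exact hkpos)).continuousAt
    have htends0 : Filter.Tendsto (fun t : ℂ => t - ((k:ℕ):ℂ))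
        (nhdsWithin ((k:ℕ):ℂ) {((k:ℕ):ℂ)}ᶜ) (nhds 0) := by
      have h1 : Filter.Tendsto (fun t : ℂ => t - ((k:ℕ):ℂ)) (nhds ((k:ℕ):ℂ))
          (nhds (((k:ℕ):ℂ) - ((k:ℕ):ℂ))) := (continuous_id.sub continuous_const).tendsto _
      simpa using h1.mono_left nhdsWithin_le_nhds
    have hcos_cont : ContinuousAt (fun t : ℂ => Complex.cos ((Real.pi:ℂ) * t)) ((k:ℕ):ℂ) := by
      fun_prop
    -- part 1
    have hc1 := (((hΦcont.mul hcos_cont).tendsto.mono_left nhdsWithin_le_nhds).mul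
      (hslope.inv₀ (mul_ne_zero hπ hcos0)))
    have heq1 : ∀ᶠ t in nhdsWithin ((k:ℕ):ℂ) {((k:ℕ):ℂ)}ᶜ,
        Φ t * Complex.cos ((Real.pi:ℂ) * t)
            * (Complex.sin ((Real.pi:ℂ) * t) / (t - ((k:ℕ):ℂ)))⁻¹
          = (t - ((k:ℕ):ℂ)) * (Φ t * Complex.cot ((Real.pi:ℂ) * t)) := by
      refine Filter.Eventually.of_forall fun t => ?_
      rw [Complex.cot_eq_cos_div_sin, inv_div]
      ring
    have hpart1 := Filter.Tendsto.congr' heq1 hc1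
    have hval1 : Φ ((k:ℕ):ℂ) * Complex.cos ((Real.pi:ℂ) * ((k:ℕ):ℂ)) *
        ((Real.pi:ℂ) * Complex.cos ((Real.pi:ℂ) * ((k:ℕ):ℂ)))⁻¹
          = Φ ((k:ℕ):ℂ) / (Real.pi:ℂ) := by
      field_simp
    simp only [Pi.mul_apply] at hpart1
    rw [hval1] at hpart1
    -- part 2
    have hSigdiff : DifferentiableAt ℂ (fun t : ℂ => ∑ j ∈ (Finset.Icc 1 n).erase k,
        Φ ((j:ℕ):ℂ) * ((Real.pi:ℂ) * (t - ((j:ℕ):ℂ)))⁻¹) ((k:ℕ):ℂ) := by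
      apply DifferentiableAt.fun_sum
      intro j hj
      have hjk : ((k:ℕ):ℂ) ≠ ((j:ℕ):ℂ) := by
        intro h
        exact Finset.ne_of_mem_erase hj (by exact_mod_cast h.symm)
      refine (differentiableAt_const _).mul (DifferentiableAt.inv ?_ ?_)
      · exact (differentiableAt_id.sub_const _).const_mul _
      · exact mul_ne_zero hπ (sub_ne_zero.mpr hjk)
    have hc2 := Filter.Tendsto.add
      (tendsto_const_nhds (x := Φ ((k:ℕ):ℂ) / (Real.pi:ℂ))
        (f := nhdsWithin ((k:ℕ):ℂ) {((k:ℕ):ℂ)}ᶜ))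
      (htends0.mul (hSigdiff.continuousAt.tendsto.mono_left nhdsWithin_le_nhds))
    have heq2 : ∀ᶠ t in nhdsWithin ((k:ℕ):ℂ) {((k:ℕ):ℂ)}ᶜ,
        Φ ((k:ℕ):ℂ) / (Real.pi:ℂ) + (t - ((k:ℕ):ℂ)) * (∑ j ∈ (Finset.Icc 1 n).erase k,
          Φ ((j:ℕ):ℂ) * ((Real.pi:ℂ) * (t - ((j:ℕ):ℂ)))⁻¹) = (t - ((k:ℕ):ℂ)) * S t := by
      filter_upwards [self_mem_nhdsWithin] with t ht
      have htk : t - ((k:ℕ):ℂ) ≠ 0 := sub_ne_zero.mpr (by simpa using ht)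
      rw [hS]
      simp only
      rw [← Finset.add_sum_erase _ (fun j : ℕ => Φ ((j:ℕ):ℂ)
        * ((Real.pi:ℂ) * (t - ((j:ℕ):ℂ)))⁻¹) hk]
      rw [mul_add]
      congr 1
      field_simp
    have hpart2 := Filter.Tendsto.congr' heq2 hc2
    rw [show Φ ((k:ℕ):ℂ) / (Real.pi:ℂ) + 0 * (∑ j ∈ (Finset.Icc 1 n).erase k,
        Φ ((j:ℕ):ℂ) * ((Real.pi:ℂ) * (((k:ℕ):ℂ) - ((j:ℕ):ℂ)))⁻¹)
        = Φ ((k:ℕ):ℂ) / (Real.pi:ℂ) by ring] at hpart2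
    -- combine
    have hmain : Filter.Tendsto (fun t : ℂ => (t - ((k:ℕ):ℂ)) * g t)
        (nhdsWithin ((k:ℕ):ℂ) {((k:ℕ):ℂ)}ᶜ) (nhds 0) := by
      have hcomb := hpart1.sub hpart2
      rw [sub_self] at hcomb
      refine hcomb.congr fun t => ?_
      rw [hg]
      ring
    refine (Asymptotics.isLittleO_iff_tendsto' ?_).mpr ?_
    · filter_upwards [self_mem_nhdsWithin] with t ht h0
      exact absurd (inv_eq_zero.mp h0) (sub_ne_zero.mpr (by simpa using ht))
    · have h2 : Filter.Tendsto (fun t : ℂ => (t - ((k:ℕ):ℂ)) * g t - (t - ((k:ℕ):ℂ)) * g ((k:ℕ):ℂ))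
          (nhdsWithin ((k:ℕ):ℂ) {((k:ℕ):ℂ)}ᶜ) (nhds 0) := by
        have h3 := hmain.sub (htends0.mul_const (g ((k:ℕ):ℂ)))
        simpa using h3
      refine h2.congr fun t => ?_
      rw [div_eq_mul_inv, inv_inv]
      ring
  -- extension
  set P : Finset ℂ := (Finset.Icc 1 n).image (fun k : ℕ => (k:ℂ)) with hP
  set G : ℂ → ℂ := fun t => if t ∈ P then Filter.limUnder (nhdsWithin t {t}ᶜ) g else g t with hG
  have hupdate : ∀ k ∈ Finset.Icc 1 n, DifferentiableOn ℂ
      (Function.update g ((k:ℕ):ℂ) (Filter.limUnder (nhdsWithin ((k:ℕ):ℂ) {((k:ℕ):ℂ)}ᶜ) g))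
      (ball ((k:ℕ):ℂ) (1/2)) := by
    intro k hk
    apply Complex.differentiableOn_update_limUnder_of_isLittleO
      (ball_mem_nhds _ (by norm_num))
    · intro t ht
      have htk : t ≠ ((k:ℕ):ℂ) := by
        intro h
        exact ht.2 (by rw [h]; exact rfl)
      obtain ⟨ha, hb, hc⟩ := hball_avoid k hk t ht.1 htk
      exact (hgdiff t ha hc hb).differentiableWithinAt
    · exact hlittleO k hk
  have hGeq : ∀ k ∈ Finset.Icc 1 n, Set.EqOn G
      (Function.update g ((k:ℕ):ℂ) (Filter.limUnder (nhdsWithin ((k:ℕ):ℂ) {((k:ℕ):ℂ)}ᶜ) g))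
      (ball ((k:ℕ):ℂ) (1/2)) := by
    intro k hk t ht
    by_cases htk : t = ((k:ℕ):ℂ)
    · rw [htk, Function.update_self, hG]
      simp only
      rw [if_pos (Finset.mem_image.mpr ⟨k, hk, rfl⟩)]
    · have htP : t ∉ P := by
        rw [hP]
        simp only [Finset.mem_image]
        rintro ⟨j, hj, rfl⟩
        exact (hball_avoid k hk _ ht htk).2.1 j hj rfl
      rw [hG]
      simp only
      rw [if_neg htP, Function.update_of_ne htk]
  have hGdiffAt : ∀ t : ℂ, 1/2 < t.re → t.re < (n:ℝ) + 1/2 → DifferentiableAt ℂ G t := by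
    intro t h1 h2
    by_cases htP : t ∈ P
    · have htP' := htP
      rw [hP] at htP'
      obtain ⟨k, hk, rfl⟩ := Finset.mem_image.mp htP'
      have hb := (hupdate k hk).differentiableAt (ball_mem_nhds _ (by norm_num))
      exact hb.congr_of_eventuallyEq
        (Filter.eventuallyEq_of_mem (ball_mem_nhds _ (by norm_num)) (hGeq k hk))
    · have hopen : IsOpen ((↑P : Set ℂ))ᶜ := (P.finite_toSet.isClosed).isOpen_compl
      have hev : G =ᶠ[nhds t] g :=
        Filter.eventuallyEq_of_mem (hopen.mem_nhds (by simpa using htP))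
          (fun s hs => by rw [hG]; simp only; rw [if_neg (by simpa using hs)])
      have h3 : ∀ j ∈ Finset.Icc 1 n, t ≠ (j:ℂ) := by
        intro j hj hteq
        exact htP (by rw [hteq, hP]; exact Finset.mem_image.mpr ⟨j, hj, rfl⟩)
      exact (hgdiff t (by linarith) (hsin_ne t h1 h2 h3) h3).congr_of_eventuallyEq hev
  -- Cauchy
  have hbound : (3:ℝ)/4 ≤ (n:ℝ) + 1/4 := by
    have h1 : (1:ℝ) ≤ n := by exact_mod_cast hn
    linarith
  have hn1 : (1:ℝ) ≤ (n:ℝ) := by exact_mod_cast hn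
  have hCauchy := Complex.integral_boundary_rect_eq_zero_of_differentiableOn G
      (((3/4 : ℝ):ℂ) - Complex.I) ((((n:ℝ) + 1/4 : ℝ):ℂ) + Complex.I) ?diffOn
  case diffOn =>
    intro t ht
    simp only [Complex.sub_re, Complex.add_re, Complex.ofReal_re, Complex.I_re, sub_zero,
      add_zero, Complex.sub_im, Complex.add_im, Complex.ofReal_im, Complex.I_im, zero_sub,
      zero_add] at ht
    rw [Complex.mem_reProdIm, Set.uIcc_of_le hbound,
      Set.uIcc_of_le (by norm_num : (-1:ℝ) ≤ 1)] at ht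
    obtain ⟨⟨ha1, ha2⟩, _⟩ := ht
    exact (hGdiffAt t (by linarith) (by linarith)).differentiableWithinAt
  have hrG : rectContour n G = 0 := by
    simp only [Complex.sub_re, Complex.add_re, Complex.ofReal_re, Complex.I_re, sub_zero,
      add_zero, Complex.sub_im, Complex.add_im, Complex.ofReal_im, Complex.I_im, zero_sub,
      zero_add, smul_eq_mul, Complex.ofReal_one, Complex.ofReal_neg, one_mul, neg_mul,
      ← sub_eq_add_neg] at hCauchy
    unfold rectContour
    rw [intervalIntegral.integral_mul_const, intervalIntegral.integral_mul_const]
    linear_combination hCauchy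
  have hside_ne : ∀ t : ℂ, (t.im = -1 ∨ t.im = 1 ∨ t.re = 3/4 ∨ t.re = (n:ℝ) + 1/4) →
      t ∉ P := by
    intro t hside htP
    rw [hP] at htP
    obtain ⟨j, hj, rfl⟩ := Finset.mem_image.mp htP
    obtain ⟨hj1, hjn⟩ := Finset.mem_Icc.mp hj
    exact side_ne_nat n _ hside j hj1 hjn rfl
  have hGg : rectContour n G = rectContour n g :=
    rectContour_congr n G g fun t hside => by
      rw [hG]; simp only; rw [if_neg (hside_ne t hside)]
  -- integrability
  have hRI_h : RectIntegrable n (fun t => Φ t * Complex.cot ((Real.pi:ℂ) * t)) := by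
    apply rectIntegrable_of n hn
    intro t h1 h2 h3 h4 hside
    exact ((phi_diff m L (by linarith)).continuousAt).mul (cot_diff (side_sin_ne n t hside)).continuousAt
  have hRI_terms : ∀ k ∈ Finset.Icc 1 n,
      RectIntegrable n (fun t => Φ ((k:ℕ):ℂ) * ((Real.pi:ℂ) * (t - ((k:ℕ):ℂ)))⁻¹) := by
    intro k hk
    obtain ⟨hk1, hkn⟩ := Finset.mem_Icc.mp hk
    apply rectIntegrable_of n hn
    intro t h1 h2 h3 h4 hside
    refine (continuousAt_const.mul (ContinuousAt.inv₀ (by fun_prop) ?_))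
    exact mul_ne_zero hπ (sub_ne_zero.mpr (side_ne_nat n t hside k hk1 hkn))
  have hRI_S : RectIntegrable n S := by
    apply rectIntegrable_of n hn
    intro t h1 h2 h3 h4 hside
    have : DifferentiableAt ℂ S t := by
      rw [hS]
      apply DifferentiableAt.fun_sum
      intro j hj
      obtain ⟨hj1, hjn⟩ := Finset.mem_Icc.mp hj
      refine (differentiableAt_const _).mul (DifferentiableAt.inv ?_ ?_)
      · exact (differentiableAt_id.sub_const _).const_mul _
      · exact mul_ne_zero hπ (sub_ne_zero.mpr (side_ne_nat n t hside j hj1 hjn))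
    exact this.continuousAt
  -- split
  have hsplit := rectContour_sub n (fun t => Φ t * Complex.cot ((Real.pi:ℂ) * t)) S hRI_h hRI_S
  have hgeq0 : rectContour n (fun t => Φ t * Complex.cot ((Real.pi:ℂ) * t) - S t) = 0 := by
    have e : (fun t => Φ t * Complex.cot ((Real.pi:ℂ) * t) - S t) = g := hg.symm
    rw [e, ← hGg]
    exact hrG
  have hmain2 : rectContour n (fun t => Φ t * Complex.cot ((Real.pi:ℂ) * t)) = rectContour n S := by
    rw [hgeq0] at hsplit
    exact (sub_eq_zero.mp hsplit.symm)
  -- evaluate rect S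
  have hSval : rectContour n S = ∑ k ∈ Finset.Icc 1 n,
      (2 * Complex.I * (Complex.exp ((L:ℂ) * k) * ((Complex.Gamma (k:ℂ))^m)⁻¹)) := by
    have h1 := rectContour_sum n (Finset.Icc 1 n)
      (fun (k:ℕ) (t:ℂ) => Φ ((k:ℕ):ℂ) * ((Real.pi:ℂ) * (t - ((k:ℕ):ℂ)))⁻¹) hRI_terms
    rw [hS]
    rw [h1]
    refine Finset.sum_congr rfl fun k hk => ?_
    obtain ⟨hk1, hkn⟩ := Finset.mem_Icc.mp hk
    show rectContour n (fun t : ℂ => Φ ((k:ℕ):ℂ) * ((Real.pi:ℂ) * (t - ((k:ℕ):ℂ)))⁻¹)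
      = 2 * Complex.I * (Complex.exp ((L:ℂ) * k) * ((Complex.Gamma (k:ℂ))^m)⁻¹)
    have e : (fun t : ℂ => Φ ((k:ℕ):ℂ) * ((Real.pi:ℂ) * (t - ((k:ℕ):ℂ)))⁻¹)
        = fun t : ℂ => (Φ ((k:ℕ):ℂ) * (Real.pi:ℂ)⁻¹) * (t - ((k:ℕ):ℂ))⁻¹ := by
      funext t
      rw [mul_inv]
      ring
    rw [e, rectContour_const_mul, rect_inv n k hk1 hkn]
    rw [hΦ]
    simp only
    have hcancel : (Real.pi:ℂ) * (Real.pi:ℂ)⁻¹ = 1 := mul_inv_cancel₀ hπ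
    linear_combination (2 * Complex.I * Complex.exp ((L:ℂ) * k) *
      ((Complex.Gamma ((k:ℕ):ℂ))^m)⁻¹) * hcancel
  rw [show (fun t => Complex.exp ((L:ℂ) * t) * ((Complex.Gamma t)^m)⁻¹ *
      Complex.cot ((Real.pi:ℂ) * t)) = (fun t => Φ t * Complex.cot ((Real.pi:ℂ) * t))
      from rfl]
  rw [hmain2, hSval, Finset.mul_sum]


lemma Iint_real (m : ℕ) (X : ℝ) (hX : 0 < X) :
    (∫ u : ℝ, Complex.Gamma (1/2 + (u:ℂ) * Complex.I) ^ m *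
      Complex.exp (-((Real.log X : ℝ):ℂ) * (1/2 + (u:ℂ) * Complex.I)))
    = ((2 * Real.pi * Gm m X : ℝ) : ℂ) := by
  set F : ℝ → ℂ := fun u => Complex.Gamma (1/2 + (u:ℂ) * Complex.I) ^ m *
    Complex.exp (-((Real.log X : ℝ):ℂ) * (1/2 + (u:ℂ) * Complex.I)) with hF
  have hhalf : (starRingEnd ℂ) (1/2 : ℂ) = 1/2 := by
    rw [map_div₀, map_one, map_ofNat]
  have hconj : ∀ u : ℝ, (starRingEnd ℂ) (F u) = F (-u) := by
    intro u
    rw [hF]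
    simp only
    rw [map_mul, map_pow, ← Complex.Gamma_conj, ← Complex.exp_conj]
    have h1 : (starRingEnd ℂ) (1/2 + (u:ℂ) * Complex.I) = 1/2 + ((-u:ℝ):ℂ) * Complex.I := by
      rw [map_add, hhalf, map_mul, Complex.conj_I, Complex.conj_ofReal]
      push_cast
      ring
    rw [map_mul, map_neg, Complex.conj_ofReal, h1]
  have hFsame : (∫ u : ℝ, F u) = ∫ u : ℝ, F (-u) := by
    exact (MeasureTheory.integral_neg_eq_self F volume).symm
  have h3 : (starRingEnd ℂ) (∫ u : ℝ, F u) = ∫ u : ℝ, F u := by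
    rw [← integral_conj]
    simp_rw [hconj]
    exact hFsame.symm
  have h4 : (∫ u : ℝ, F u) = (((∫ u : ℝ, F u).re : ℝ) : ℂ) :=
    (Complex.conj_eq_iff_re.mp h3).symm
  have h5 : (∫ u : ℝ, Complex.Gamma (1 / 2 + u * Complex.I) ^ m *
      (X : ℂ) ^ (-(1 / 2 + u * Complex.I))) = ∫ u : ℝ, F u := by
    congr 1
    funext u
    rw [hF]
    simp only
    congr 1
    rw [Complex.cpow_def_of_ne_zero (Complex.ofReal_ne_zero.mpr hX.ne'),
      ← Complex.ofReal_log hX.le]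
    congr 1
    ring
  have h6 : Gm m X = (1 / (2 * Real.pi)) * (∫ u : ℝ, F u).re := by
    rw [Gm, h5]
  rw [h4]
  rw [h6]
  have hπ : Real.pi ≠ 0 := Real.pi_ne_zero
  congr 1
  field_simp


/-- Double contour integral representation for the density `ρ_n^m`:
`ρ_n^m(z) = (1/(n(2πi)²)) ∮_{γ_n} [∫_{Re s = 1/2} (Γ(s)/Γ(t))^m n^{m(t−s)} |z|^{2(t−s−1)} ds]
cot(πt) dt`, the inner integral parametrized by `s = 1/2 + iu`, `u ∈ ℝ` (so `ds = i du`). -/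
theorem stmt8 (m n : ℕ) (hm : 1 ≤ m) (hn : 1 ≤ n) (z : ℂ) (hz : z ≠ 0) :
    (rhoProd m n z : ℂ) =
      (1 / ((n : ℂ) * (2 * Real.pi * Complex.I) ^ 2)) *
        rectContour n (fun t =>
          (∫ u : ℝ,
            (Complex.Gamma (1 / 2 + u * Complex.I) / Complex.Gamma t) ^ m *
              (n : ℂ) ^ ((m : ℂ) * (t - 1 / 2 - u * Complex.I)) *
              ((‖z‖ : ℝ) : ℂ) ^ (2 * (t - 3 / 2 - u * Complex.I)) *
              Complex.I) *
          Complex.cot (Real.pi * t)) := by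
  have hπC : (Real.pi : ℂ) ≠ 0 := Complex.ofReal_ne_zero.mpr Real.pi_ne_zero
  have hnR : (0:ℝ) < n := by exact_mod_cast Nat.lt_of_lt_of_le Nat.zero_lt_one hn
  have hr : 0 < ‖z‖ := norm_pos_iff.mpr hz
  unfold rhoProd
  set r : ℝ := ‖z‖ with hrdef
  have hX : 0 < (n:ℝ)^m * r^2 := mul_pos (pow_pos hnR m) (pow_pos hr 2)
  set X : ℝ := (n:ℝ)^m * r^2 with hXdef
  set LX : ℝ := Real.log X with hLXd
  set Lr : ℝ := Real.log r with hLrd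
  have hLXeq : LX = m * Real.log n + 2 * Lr := by
    rw [hLXd, hXdef, Real.log_mul (by positivity) (pow_ne_zero _ hr.ne'), Real.log_pow, Real.log_pow]
    push_cast
    ring
  set Iint : ℂ := ∫ u : ℝ, Complex.Gamma (1/2 + (u:ℂ) * Complex.I) ^ m *
    Complex.exp (-((LX:ℝ):ℂ) * (1/2 + (u:ℂ) * Complex.I)) with hIintd
  have hIval : Iint = ((2 * Real.pi * Gm m X : ℝ) : ℂ) := by
    rw [hIintd, hLXd]
    exact Iint_real m X hX
  -- pointwise inner integral evaluation
  have hinner : ∀ t : ℂ,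
      (∫ u : ℝ, (Complex.Gamma (1/2 + (u:ℂ) * Complex.I) / Complex.Gamma t) ^ m *
        (n:ℂ) ^ ((m:ℂ) * (t - 1/2 - (u:ℂ) * Complex.I)) *
        ((r:ℝ):ℂ) ^ (2 * (t - 3/2 - (u:ℂ) * Complex.I)) * Complex.I)
      = (Complex.I * Complex.exp (((-(2*Lr):ℝ)):ℂ) * Iint) *
        (Complex.exp (((LX:ℝ):ℂ) * t) * ((Complex.Gamma t)^m)⁻¹) := by
    intro t
    have hn0C : (n:ℂ) ≠ 0 := Nat.cast_ne_zero.mpr (by omega)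
    have hr0C : ((r:ℝ):ℂ) ≠ 0 := Complex.ofReal_ne_zero.mpr hr.ne'
    have hlogn : Complex.log (n:ℂ) = ((Real.log n : ℝ):ℂ) := by
      rw [show ((n:ℕ):ℂ) = (((n:ℝ)):ℂ) by push_cast; rfl, ← Complex.ofReal_log (le_of_lt hnR)]
    have hlogr : Complex.log ((r:ℝ):ℂ) = ((Lr:ℝ):ℂ) := by
      rw [← Complex.ofReal_log hr.le, hLrd]
    have hptw : ∀ u : ℝ,
        (Complex.Gamma (1/2 + (u:ℂ) * Complex.I) / Complex.Gamma t) ^ m *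
          (n:ℂ) ^ ((m:ℂ) * (t - 1/2 - (u:ℂ) * Complex.I)) *
          ((r:ℝ):ℂ) ^ (2 * (t - 3/2 - (u:ℂ) * Complex.I)) * Complex.I
        = (Complex.I * Complex.exp (((-(2*Lr):ℝ)):ℂ) *
            (Complex.exp (((LX:ℝ):ℂ) * t) * ((Complex.Gamma t)^m)⁻¹)) *
          (Complex.Gamma (1/2 + (u:ℂ) * Complex.I) ^ m *
            Complex.exp (-((LX:ℝ):ℂ) * (1/2 + (u:ℂ) * Complex.I))) := by
      intro u
      rw [div_pow, div_eq_mul_inv, Complex.cpow_def_of_ne_zero hn0C,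
        Complex.cpow_def_of_ne_zero hr0C, hlogn, hlogr]
      have hexp : ((Real.log n : ℝ):ℂ) * ((m:ℂ) * (t - 1/2 - (u:ℂ) * Complex.I)) +
          ((Lr:ℝ):ℂ) * (2 * (t - 3/2 - (u:ℂ) * Complex.I))
          = ((-(2*Lr):ℝ):ℂ) + ((LX:ℝ):ℂ) * t +
            (-((LX:ℝ):ℂ) * (1/2 + (u:ℂ) * Complex.I)) := by
        have h1 : ((LX:ℝ):ℂ) = (m:ℂ) * ((Real.log n : ℝ):ℂ) + 2 * ((Lr:ℝ):ℂ) := by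
          exact_mod_cast congrArg (fun x : ℝ => (x:ℂ)) hLXeq
        rw [h1]
        push_cast
        ring
      have e1 : Complex.exp (((Real.log n : ℝ):ℂ) * ((m:ℂ) * (t - 1/2 - (u:ℂ) * Complex.I))) *
          Complex.exp (((Lr:ℝ):ℂ) * (2 * (t - 3/2 - (u:ℂ) * Complex.I)))
          = Complex.exp (((-(2*Lr):ℝ)):ℂ) * Complex.exp (((LX:ℝ):ℂ) * t) *
            Complex.exp (-((LX:ℝ):ℂ) * (1/2 + (u:ℂ) * Complex.I)) := by
        rw [← Complex.exp_add, ← Complex.exp_add, ← Complex.exp_add, hexp]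
      linear_combination (Complex.Gamma (1/2 + (u:ℂ) * Complex.I) ^ m *
        ((Complex.Gamma t)^m)⁻¹ * Complex.I) * e1
    calc (∫ u : ℝ, (Complex.Gamma (1/2 + (u:ℂ) * Complex.I) / Complex.Gamma t) ^ m *
        (n:ℂ) ^ ((m:ℂ) * (t - 1/2 - (u:ℂ) * Complex.I)) *
        ((r:ℝ):ℂ) ^ (2 * (t - 3/2 - (u:ℂ) * Complex.I)) * Complex.I)
        = ∫ u : ℝ, (Complex.I * Complex.exp (((-(2*Lr):ℝ)):ℂ) *
            (Complex.exp (((LX:ℝ):ℂ) * t) * ((Complex.Gamma t)^m)⁻¹)) *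
          (Complex.Gamma (1/2 + (u:ℂ) * Complex.I) ^ m *
            Complex.exp (-((LX:ℝ):ℂ) * (1/2 + (u:ℂ) * Complex.I))) := by
          exact MeasureTheory.integral_congr_ae (Filter.Eventually.of_forall hptw)
      _ = (Complex.I * Complex.exp (((-(2*Lr):ℝ)):ℂ) *
            (Complex.exp (((LX:ℝ):ℂ) * t) * ((Complex.Gamma t)^m)⁻¹)) * Iint := by
          rw [MeasureTheory.integral_const_mul, hIintd]
      _ = (Complex.I * Complex.exp (((-(2*Lr):ℝ)):ℂ) * Iint) *
            (Complex.exp (((LX:ℝ):ℂ) * t) * ((Complex.Gamma t)^m)⁻¹) := by ring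
  -- rewrite the contour integrand
  have hfun : (fun t => (∫ u : ℝ,
        (Complex.Gamma (1/2 + (u:ℂ) * Complex.I) / Complex.Gamma t) ^ m *
        (n:ℂ) ^ ((m:ℂ) * (t - 1/2 - (u:ℂ) * Complex.I)) *
        ((r:ℝ):ℂ) ^ (2 * (t - 3/2 - (u:ℂ) * Complex.I)) * Complex.I) *
        Complex.cot ((Real.pi:ℝ) * t))
      = fun t => (Complex.I * Complex.exp (((-(2*Lr):ℝ)):ℂ) * Iint) *
          (Complex.exp (((LX:ℝ):ℂ) * t) * ((Complex.Gamma t)^m)⁻¹ *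
            Complex.cot ((Real.pi:ℂ) * t)) := by
    funext t
    rw [hinner t]
    ring
  rw [hfun, rectContour_const_mul, core m n hn LX, hIval]
  -- simplify the sum
  have hΓfact : ∀ k ∈ Finset.Icc 1 n, Complex.Gamma ((k:ℕ):ℂ) = ((k-1).factorial : ℂ) := by
    intro k hk
    obtain ⟨hk1, _⟩ := Finset.mem_Icc.mp hk
    rw [show ((k:ℕ):ℂ) = (((k-1:ℕ)):ℂ) + 1 by push_cast [Nat.cast_sub hk1]; ring]
    exact Complex.Gamma_nat_eq_factorial (k-1)
  have hexpk : ∀ k : ℕ, Complex.exp (((LX:ℝ):ℂ) * (k:ℂ)) = ((X^k : ℝ):ℂ) := by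
    intro k
    rw [show ((LX:ℝ):ℂ) * (k:ℂ) = ((LX * k : ℝ):ℂ) by push_cast; ring, ← Complex.ofReal_exp]
    congr 1
    rw [mul_comm, Real.exp_nat_mul, hLXd, Real.exp_log hX]
  have hsum : (∑ k ∈ Finset.Icc 1 n,
        Complex.exp (((LX:ℝ):ℂ) * (k:ℂ)) * ((Complex.Gamma ((k:ℕ):ℂ))^m)⁻¹)
      = ((X:ℝ):ℂ) * ∑ j ∈ Finset.range n, ((X:ℝ):ℂ)^j * ((((j.factorial:ℕ)):ℂ)^m)⁻¹ := by
    rw [← Finset.Ico_add_one_right_eq_Icc, Finset.sum_Ico_eq_sum_range]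
    rw [show n + 1 - 1 = n from Nat.succ_sub_one n]
    rw [Finset.mul_sum]
    refine Finset.sum_congr rfl fun j hj => ?_
    rw [hexpk, hΓfact (1+j) (Finset.mem_Icc.mpr
      ⟨by omega, by have := Finset.mem_range.mp hj; omega⟩)]
    rw [show 1 + j - 1 = j from by omega]
    push_cast
    ring
  rw [hsum]
  -- final algebra
  have hexp2 : Complex.exp (((-(2*Lr):ℝ)):ℂ) = (((r^2)⁻¹ : ℝ):ℂ) := by
    rw [← Complex.ofReal_exp]
    congr 1
    rw [hLrd, show -(2*Real.log r) = Real.log ((r^2)⁻¹) by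
      rw [Real.log_inv, Real.log_pow]; push_cast; ring]
    exact Real.exp_log (inv_pos.mpr (pow_pos hr 2))
  rw [hexp2]
  have hCsimp : ∀ A B C : ℂ, (1/((n:ℂ) * (2*(Real.pi:ℂ)*Complex.I)^2)) *
      ((Complex.I * A * B) * (2*Complex.I*C)) = A * B * C / (2 * (Real.pi:ℂ)^2 * (n:ℂ)) := by
    intro A B C
    have hsq : (2*(Real.pi:ℂ)*Complex.I)^2 = -(4*(Real.pi:ℂ)^2) := by
      rw [mul_pow, mul_pow, Complex.I_sq]; ring
    rw [hsq, show (Complex.I * A * B) * (2*Complex.I*C)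
      = (Complex.I*Complex.I) * (2*(A*B*C)) from by ring, Complex.I_mul_I]
    have hn0C : (n:ℂ) ≠ 0 := Nat.cast_ne_zero.mpr (by omega)
    field_simp
    ring
  rw [hCsimp]
  push_cast
  rw [Finset.mul_sum, Finset.mul_sum, Finset.mul_sum, Finset.sum_div]
  refine Finset.sum_congr rfl fun i _ => ?_
  have hXc : ((X:ℝ):ℂ) = (n:ℂ)^m * ((r:ℝ):ℂ)^2 := by
    rw [hXdef]; push_cast; ring
  have hnm : (n:ℂ)^(m-1) * (n:ℂ) = (n:ℂ)^m := by
    rw [← pow_succ]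
    congr 1
    omega
  have hreal : (n:ℝ)^(m-1) * (X^i / (Real.pi * (i.factorial:ℝ)^m) * Gm m X)
      = (r^2)⁻¹ * (2*Real.pi*Gm m X) * (X * (X^i * (((i.factorial:ℝ))^m)⁻¹))
        / (2*Real.pi^2*(n:ℝ)) := by
    have hπR : Real.pi ≠ 0 := Real.pi_ne_zero
    have hnne : (n:ℝ) ≠ 0 := hnR.ne'
    have hrne : r ≠ 0 := hr.ne'
    have hfne : ((i.factorial : ℕ):ℝ) ≠ 0 := Nat.cast_ne_zero.mpr i.factorial_ne_zero
    obtain ⟨m', rfl⟩ : ∃ m', m = m'+1 := ⟨m-1, by omega⟩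
    simp only [Nat.add_sub_cancel]
    rw [hXdef]
    field_simp
    ring
  have hC := congrArg (fun x : ℝ => (x:ℂ)) hreal
  push_cast at hC
  linear_combination hC
end
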